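/- Fix reals 0 < ρ₁ < ρ₂ and c, c₁, c₂ ∈ ℝ, and set B₁(x₁) = (x₁ − ρ₁)(x₁ − ρ₂)/x₁ and B₂(x₁) = (x₁² − ρ₁ρ₂)/(2x₁²) for x₁ > 0. Consider the desingularized vector field g(x₁, r) = ( B₁(x₁) − c x₁ r − c₁ r, −r (B₂(x₁) − c r − c₂ r²) ) on (0,∞) × ℝ. Then (ρ₁, 0) and (ρ₂, 0) are equilibria of g lying on the horizon {r = 0}, the Jacobian matrix of g at (ρ₁, 0) is the upper triangular matrix with diagonal entries (ρ₁ − ρ₂)/ρ₁ and (ρ₂ − ρ₁)/(2ρ₁) and upper-right entry −cρ₁ − c₁, and the Jacobian matrix of g at (ρ₂, 0) is the upper triangular matrix with diagonal entries (ρ₂ − ρ₁)/ρ₂ and −(ρ₂ − ρ₁)/(2ρ₂) and upper-right entry −cρ₂ − c₁. In particular, at (ρ₁, 0) the eigenvalues satisfy (ρ₁ − ρ₂)/ρ₁ < 0 < (ρ₂ − ρ₁)/(2ρ₁), and at (ρ₂, 0) they satisfy −(ρ₂ − ρ₁)/(2ρ₂) < 0 < (ρ₂ − ρ₁)/ρ₂;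 that is, both equilibria at infinity are hyperbolic saddles. -/

import Mathlib

/-- `B₁(x₁) = (x₁ − ρ₁)(x₁ − ρ₂)/x₁`. -/
noncomputable def B1 (ρ₁ ρ₂ : ℝ) (x₁ : ℝ) : ℝ := (x₁ - ρ₁) * (x₁ - ρ₂) / x₁

/-- `B₂(x₁) = (x₁² − ρ₁ρ₂)/(2x₁²)`. -/
noncomputable def B2 (ρ₁ ρ₂ : ℝ) (x₁ : ℝ) : ℝ := (x₁ ^ 2 - ρ₁ * ρ₂) / (2 * x₁ ^ 2)

/-- The desingularized two-phase flow vector field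
`g(x₁,r) = (B₁(x₁) − cx₁r − c₁r, −r(B₂(x₁) − cr − c₂r²))`. -/
noncomputable def twoFluidG (ρ₁ ρ₂ c c₁ c₂ : ℝ) : ℝ × ℝ → ℝ × ℝ :=
  fun p =>
    (B1 ρ₁ ρ₂ p.1 - c * p.1 * p.2 - c₁ * p.2,
      -p.2 * (B2 ρ₁ ρ₂ p.1 - c * p.2 - c₂ * p.2 ^ 2))

open ContinuousLinearMap in
lemma keyDeriv (ρ₁ ρ₂ c c₁ c₂ a : ℝ) (ha : a ≠ 0) :
    DifferentiableAt ℝ (twoFluidG ρ₁ ρ₂ c c₁ c₂) (a, 0) ∧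
    fderiv ℝ (twoFluidG ρ₁ ρ₂ c c₁ c₂) (a, 0) (1, 0) =
      ((((a - ρ₂) + (a - ρ₁)) * a - (a - ρ₁) * (a - ρ₂)) / a ^ 2, 0) ∧
    fderiv ℝ (twoFluidG ρ₁ ρ₂ c c₁ c₂) (a, 0) (0, 1) =
      (-c * a - c₁, -B2 ρ₁ ρ₂ a) := by
  have hx : HasFDerivAt (fun p : ℝ × ℝ => p.1) (fst ℝ ℝ ℝ) (a, 0) := hasFDerivAt_fst
  have hr : HasFDerivAt (fun p : ℝ × ℝ => p.2) (snd ℝ ℝ ℝ) (a, 0) := hasFDerivAt_snd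
  have hB1d : HasDerivAt (fun x : ℝ => (x - ρ₁) * (x - ρ₂) / x)
      (((1 * (a - ρ₂) + (a - ρ₁) * 1) * a - (a - ρ₁) * (a - ρ₂) * 1) / a ^ 2) a :=
    (((hasDerivAt_id a).sub_const ρ₁).mul ((hasDerivAt_id a).sub_const ρ₂)).div
      (hasDerivAt_id a) ha
  have hB1 : HasFDerivAt (fun p : ℝ × ℝ => B1 ρ₁ ρ₂ p.1)
      ((((1 * (a - ρ₂) + (a - ρ₁) * 1) * a - (a - ρ₁) * (a - ρ₂) * 1) / a ^ 2) • fst ℝ ℝ ℝ)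
      (a, 0) := by have := hB1d.comp_hasFDerivAt (a, 0) hx; exact this
  have hB2d : HasDerivAt (fun x : ℝ => (x ^ 2 - ρ₁ * ρ₂) / (2 * x ^ 2))
      (((2 * a) * (2 * a ^ 2) - (a ^ 2 - ρ₁ * ρ₂) * (2 * (2 * a))) / (2 * a ^ 2) ^ 2) a := by
    have h1 : HasDerivAt (fun x : ℝ => x ^ 2 - ρ₁ * ρ₂) (2 * a) a := by
      simpa using (hasDerivAt_pow 2 a).sub_const (ρ₁ * ρ₂)
    have h2 : HasDerivAt (fun x : ℝ => 2 * x ^ 2) (2 * (2 * a)) a := by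
      simpa [mul_comm] using (hasDerivAt_pow 2 a).const_mul 2
    exact h1.div h2 (by positivity)
  have hB2 : HasFDerivAt (fun p : ℝ × ℝ => B2 ρ₁ ρ₂ p.1)
      ((((2 * a) * (2 * a ^ 2) - (a ^ 2 - ρ₁ * ρ₂) * (2 * (2 * a))) / (2 * a ^ 2) ^ 2) •
        fst ℝ ℝ ℝ) (a, 0) := by have := hB2d.comp_hasFDerivAt (a, 0) hx; exact this
  have hf1 : HasFDerivAt (fun p : ℝ × ℝ => B1 ρ₁ ρ₂ p.1 - c * p.1 * p.2 - c₁ * p.2) _ (a, 0) :=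
    (hB1.sub ((hx.const_mul c).mul hr)).sub (hr.const_mul c₁)
  have hinner : HasFDerivAt (fun p : ℝ × ℝ => B2 ρ₁ ρ₂ p.1 - c * p.2 - c₂ * p.2 ^ 2) _ (a, 0) :=
    (hB2.sub (hr.const_mul c)).sub (by have := (((hasDerivAt_pow 2 (0:ℝ)).comp_hasFDerivAt ((a,(0:ℝ))) hr)).const_mul c₂; exact this)
  have hf2 : HasFDerivAt (fun p : ℝ × ℝ => -p.2 * (B2 ρ₁ ρ₂ p.1 - c * p.2 - c₂ * p.2 ^ 2)) _
      (a, 0) := hr.neg.mul hinner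
  have H : HasFDerivAt (twoFluidG ρ₁ ρ₂ c c₁ c₂) _ (a, 0) := HasFDerivAt.prodMk hf1 hf2
  refine ⟨H.differentiableAt, ?_, ?_⟩ <;> rw [H.fderiv] <;>
    · simp only [ContinuousLinearMap.prod_apply, ContinuousLinearMap.add_apply,
        ContinuousLinearMap.sub_apply, ContinuousLinearMap.smul_apply,
        ContinuousLinearMap.coe_fst', ContinuousLinearMap.coe_snd',
        ContinuousLinearMap.neg_apply, Pi.neg_apply, smul_eq_mul, Prod.mk.injEq]
      constructor <;> ring_nf


/-- `(ρ₁,0)` and `(ρ₂,0)` are equilibria of the desingularized two-phase flow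
vector field on the horizon `{r = 0}`; the Jacobian matrices there are upper
triangular with the stated entries, and both equilibria are hyperbolic
saddles: one negative and one positive eigenvalue at each point. -/
theorem twoFluid_equilibria_at_infinity_saddles
    (ρ₁ ρ₂ : ℝ) (hρ₁ : 0 < ρ₁) (hρ₁₂ : ρ₁ < ρ₂) (c c₁ c₂ : ℝ) :
    twoFluidG ρ₁ ρ₂ c c₁ c₂ (ρ₁, 0) = (0, 0) ∧
    twoFluidG ρ₁ ρ₂ c c₁ c₂ (ρ₂, 0) = (0, 0) ∧
    DifferentiableAt ℝ (twoFluidG ρ₁ ρ₂ c c₁ c₂) (ρ₁, 0) ∧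
    fderiv ℝ (twoFluidG ρ₁ ρ₂ c c₁ c₂) (ρ₁, 0) (1, 0) = ((ρ₁ - ρ₂) / ρ₁, 0) ∧
    fderiv ℝ (twoFluidG ρ₁ ρ₂ c c₁ c₂) (ρ₁, 0) (0, 1) =
      (-c * ρ₁ - c₁, (ρ₂ - ρ₁) / (2 * ρ₁)) ∧
    DifferentiableAt ℝ (twoFluidG ρ₁ ρ₂ c c₁ c₂) (ρ₂, 0) ∧
    fderiv ℝ (twoFluidG ρ₁ ρ₂ c c₁ c₂) (ρ₂, 0) (1, 0) = ((ρ₂ - ρ₁) / ρ₂, 0) ∧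
    fderiv ℝ (twoFluidG ρ₁ ρ₂ c c₁ c₂) (ρ₂, 0) (0, 1) =
      (-c * ρ₂ - c₁, -(ρ₂ - ρ₁) / (2 * ρ₂)) ∧
    (ρ₁ - ρ₂) / ρ₁ < 0 ∧ 0 < (ρ₂ - ρ₁) / (2 * ρ₁) ∧
    -(ρ₂ - ρ₁) / (2 * ρ₂) < 0 ∧ 0 < (ρ₂ - ρ₁) / ρ₂ := by
  have hρ₂ : 0 < ρ₂ := hρ₁.trans hρ₁₂
  have h1 := keyDeriv ρ₁ ρ₂ c c₁ c₂ ρ₁ hρ₁.ne'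
  have h2 := keyDeriv ρ₁ ρ₂ c c₁ c₂ ρ₂ hρ₂.ne'
  obtain ⟨hd1, ha1, hb1⟩ := h1
  obtain ⟨hd2, ha2, hb2⟩ := h2
  have hsub : ρ₁ - ρ₂ < 0 := by linarith
  refine ⟨by simp [twoFluidG, B1], by simp [twoFluidG, B1], hd1, ?_, ?_, hd2, ?_, ?_,
    div_neg_of_neg_of_pos hsub hρ₁, div_pos (by linarith) (by linarith),
    div_neg_of_neg_of_pos (by linarith) (by linarith), div_pos (by linarith) hρ₂⟩
  · rw [ha1]; congr 1; field_simp; ring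
  · rw [hb1]; congr 1; simp only [B2]; field_simp; ring
  · rw [ha2]; congr 1; field_simp; ring
  · rw [hb2]; congr 1; simp only [B2]; field_simp
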